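/- arXiv:2010.03440 — 2 statements merged into one kernel-verified Lean document; each statement's English description precedes it below -/
import Mathlib

section
/- Let p be prime and n ≥ 1. If 1 ≤ k ≤ s_p(n), then the minimum of s_p(j_1)+...+s_p(j_k) - s_p(n) over all positive integers j_1,...,j_k with j_1+...+j_k = n equals 0; equivalently, there exists a multinomial coefficient n!/(j_1!···j_k!) with all parts positive that is not divisible by p. -/
/-- base-p digit sum -/
def sp (p n : ℕ) : ℕ := (Nat.digits p n).sum

open Nat in
lemma sum_map_base_mul (p : ℕ) : ∀ l : List ℕ, (l.map (fun x => p * x)).sum = p * l.sum := by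
  intro l
  induction l with
  | nil => simp
  | cons a t ih => simp [ih, Nat.mul_add]

open Nat

lemma sp_le (p n : ℕ) : sp p n ≤ n := Nat.digit_sum_le p n

lemma sp_rec {p : ℕ} (hp : 2 ≤ p) {n : ℕ} (hn : 1 ≤ n) :
    sp p n = n % p + sp p (n / p) := by
  unfold sp
  rw [Nat.digits_def' hp hn, List.sum_cons]

lemma sp_one {p : ℕ} (hp : 2 ≤ p) : sp p 1 = 1 := by
  rw [sp_rec hp le_rfl, Nat.mod_eq_of_lt hp, Nat.div_eq_of_lt hp]
  simp [sp]

lemma sp_base_mul {p : ℕ} (hp : 2 ≤ p) (m : ℕ) : sp p (p * m) = sp p m := by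
  rcases Nat.eq_zero_or_pos m with rfl | hm
  · simp
  · have h1 : 1 ≤ p * m := Nat.one_le_iff_ne_zero.mpr (by positivity)
    rw [sp_rec hp h1, Nat.mul_mod_right, Nat.mul_div_cancel_left _ (by omega : 0 < p)]
    omega

/-- Legendre restated additively. -/
lemma legendre' {p : ℕ} (hp : p.Prime) (n : ℕ) :
    n = sp p n + (p - 1) * padicValNat p (n !) := by
  haveI : Fact p.Prime := ⟨hp⟩
  have h := sub_one_mul_padicValNat_factorial (p := p) n
  have h2 := sp_le p n
  unfold sp at *
  omega

lemma sp_add_le {p : ℕ} (hp : p.Prime) (a b : ℕ) :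
    sp p (a + b) ≤ sp p a + sp p b := by
  haveI : Fact p.Prime := ⟨hp⟩
  have ha := legendre' hp a
  have hb := legendre' hp b
  have hab := legendre' hp (a + b)
  obtain ⟨c, hc⟩ : a ! * b ! ∣ (a + b)! := Nat.factorial_mul_factorial_dvd_factorial_add a b
  have hcne : c ≠ 0 := by
    intro h; rw [h, mul_zero] at hc; exact Nat.factorial_ne_zero _ hc
  have hv : padicValNat p (a ! * b !) ≤ padicValNat p ((a + b)!) := by
    rw [hc, padicValNat.mul (by positivity) hcne]
    exact Nat.le_add_right _ _
  rw [padicValNat.mul (Nat.factorial_ne_zero _) (Nat.factorial_ne_zero _)] at hv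
  have hp2 : 2 ≤ p := hp.two_le
  nlinarith [Nat.sub_le p 1]

lemma sp_sum_le {p : ℕ} (hp : p.Prime) {k : ℕ} (j : Fin k → ℕ) :
    sp p (∑ i, j i) ≤ ∑ i, sp p (j i) := by
  induction k with
  | zero => simp [sp]
  | succ m ih =>
    rw [Fin.sum_univ_succ, Fin.sum_univ_succ]
    calc sp p (j 0 + ∑ i : Fin m, j i.succ) ≤ sp p (j 0) + sp p (∑ i : Fin m, j i.succ) :=
          sp_add_le hp _ _
      _ ≤ sp p (j 0) + ∑ i : Fin m, sp p (j i.succ) := by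
          exact Nat.add_le_add_left (ih _) _

/-- Construction: decomposition into k positive parts with additive digit sums. -/
lemma exists_good_list {p : ℕ} (hp : 2 ≤ p) :
    ∀ n, 1 ≤ n → ∀ k, 1 ≤ k → k ≤ sp p n →
    ∃ l : List ℕ, l.length = k ∧ (∀ x ∈ l, 1 ≤ x) ∧ l.sum = n ∧
      (l.map (sp p)).sum = sp p n := by
  intro n
  induction n using Nat.strong_induction_on with
  | _ n ih =>
    intro hn k hk1 hk2
    set r := n % p with hr
    set q := n / p with hq
    have hrec : sp p n = r + sp p q := sp_rec hp hn
    have hnpq : n = p * q + r := (Nat.div_add_mod n p).symm ▸ by omega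
    by_cases hcase : k ≤ r
    · -- parts: (k-1) ones and one big part n - (k-1)
      refine ⟨List.replicate (k - 1) 1 ++ [n - (k - 1)], ?_, ?_, ?_, ?_⟩
      · simp; omega
      · intro x hx
        simp [List.mem_replicate] at hx
        have hkn : k - 1 < n := by
          have := sp_le p n; omega
        rcases hx with ⟨_, rfl⟩ | rfl <;> omega
      · simp [List.sum_replicate]
        have : k - 1 ≤ n := by have := sp_le p n; omega
        omega
      · rw [List.map_append, List.sum_append]
        have h1 : ((List.replicate (k - 1) 1).map (sp p)).sum = k - 1 := by
          simp [List.map_replicate, List.sum_replicate, sp_one hp]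
        have hbig : n - (k - 1) = p * q + (r - (k - 1)) := by omega
        have hlt : r - (k - 1) < p := by
          have : r < p := Nat.mod_lt _ (by omega); omega
        have hmod : (n - (k - 1)) % p = r - (k - 1) := by
          rw [hbig, Nat.mul_add_mod, Nat.mod_eq_of_lt hlt]
        have hdiv : (n - (k - 1)) / p = q := by
          rw [hbig, Nat.mul_add_div (by omega), Nat.div_eq_of_lt hlt]; omega
        have hpos : 1 ≤ n - (k - 1) := by omega
        have hsp : sp p (n - (k - 1)) = r - (k - 1) + sp p q := by
          rw [sp_rec hp hpos, hmod, hdiv]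
        rw [h1]
        simp only [List.map_cons, List.map_nil, List.sum_cons, List.sum_nil, add_zero]
        rw [hsp, hrec]
        omega
    · -- k > r : parts: r ones and (k - r) parts p * (parts of q)
      push_neg at hcase
      have hkr1 : 1 ≤ k - r := by omega
      have hkrq : k - r ≤ sp p q := by omega
      have hq1 : 1 ≤ q := by
        rcases Nat.eq_zero_or_pos q with h0 | h0
        · exfalso
          have hz : sp p q = 0 := by rw [h0]; simp [sp]
          omega
        · exact h0
      have hqn : q < n := Nat.div_lt_self (by omega) (by omega)
      obtain ⟨l', hlen, hpos, hsum, hspsum⟩ := ih q hqn hq1 (k - r) hkr1 hkrq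
      refine ⟨List.replicate r 1 ++ l'.map (p * ·), ?_, ?_, ?_, ?_⟩
      · simp [hlen]; omega
      · intro x hx
        simp [List.mem_replicate] at hx
        rcases hx with ⟨_, rfl⟩ | ⟨a, ha, rfl⟩
        · exact le_rfl
        · have h1 := hpos a ha
          have : 0 < p * a := Nat.mul_pos (by omega) h1
          omega
      · rw [List.sum_append, List.sum_replicate]
        rw [sum_map_base_mul p l', hsum, smul_eq_mul, mul_one]
        omega
      · rw [List.map_append, List.sum_append, List.map_map]
        have h1 : ((List.replicate r 1).map (sp p)).sum = r := by
          simp [List.map_replicate, List.sum_replicate, sp_one hp]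
        have h2 : (l'.map (sp p ∘ (p * ·))).sum = (l'.map (sp p)).sum := by
          congr 1
          apply List.map_congr_left
          intro a _
          exact sp_base_mul hp a
        rw [h1, h2, hspsum, hrec]

lemma padicValNat_prod {p : ℕ} (hp : p.Prime) {k : ℕ} (f : Fin k → ℕ)
    (hf : ∀ i, f i ≠ 0) :
    padicValNat p (∏ i, f i) = ∑ i, padicValNat p (f i) := by
  haveI : Fact p.Prime := ⟨hp⟩
  induction k with
  | zero => simp
  | succ m ih =>
    rw [Fin.prod_univ_succ, Fin.sum_univ_succ,
      padicValNat.mul (hf 0) (Finset.prod_ne_zero_iff.mpr fun i _ => hf i.succ),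
      ih _ (fun i => hf i.succ)]

theorem min_digitSum_excess_eq_zero (p : ℕ) (hp : p.Prime) (n k : ℕ)
    (hn : 1 ≤ n) (hk1 : 1 ≤ k) (hk2 : k ≤ sp p n) :
    IsLeast {m : ℤ | ∃ j : Fin k → ℕ, (∀ i, 1 ≤ j i) ∧ (∑ i, j i = n) ∧
        (∑ i, (sp p (j i) : ℤ)) - (sp p n : ℤ) = m} 0 ∧
      ∃ j : Fin k → ℕ, (∀ i, 1 ≤ j i) ∧ (∑ i, j i = n) ∧
        ¬ p ∣ Nat.multinomial Finset.univ j := by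
  haveI : Fact p.Prime := ⟨hp⟩
  have hp2 : 2 ≤ p := hp.two_le
  obtain ⟨l, hlen, hposl, hsuml, hspl⟩ := exists_good_list hp2 n hn k hk1 hk2
  set j : Fin k → ℕ := fun i => l.get (Fin.cast hlen.symm i) with hj
  have hjpos : ∀ i, 1 ≤ j i := fun i => hposl _ (List.get_mem _ _)
  have hjsum : ∑ i, j i = n := by
    rw [← hsuml, ← Fin.sum_univ_getElem l]
    exact Fin.sum_congr' (fun i => l[i.1]) hlen.symm
  have hjsp : ∑ i, sp p (j i) = sp p n := by
    rw [← hspl, ← Fin.sum_univ_fun_getElem l (sp p)]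
    exact Fin.sum_congr' (fun i => sp p l[i.1]) hlen.symm
  constructor
  · constructor
    · exact ⟨j, hjpos, hjsum, by rw [← Nat.cast_sum, hjsp]; ring⟩
    · rintro m ⟨j', hj'pos, hj'sum, rfl⟩
      have := sp_sum_le hp j'
      rw [hj'sum] at this
      have : (sp p n : ℤ) ≤ ∑ i, (sp p (j' i) : ℤ) := by
        rw [← Nat.cast_sum]; exact_mod_cast this
      omega
  · refine ⟨j, hjpos, hjsum, ?_⟩
    intro hdvd
    -- valuation of multinomial is positive, contradiction with digit sum equality
    have hmulpos : 0 < Nat.multinomial Finset.univ j := Nat.multinomial_pos _ _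
    have hspec : (∏ i, (j i)!) * Nat.multinomial Finset.univ j = n ! := by
      rw [Nat.multinomial_spec, hjsum]
    have hprodne : (∏ i, (j i)!) ≠ 0 :=
      Finset.prod_ne_zero_iff.mpr fun i _ => Nat.factorial_ne_zero _
    have hv : padicValNat p (n !) =
        (∑ i, padicValNat p ((j i)!)) + padicValNat p (Nat.multinomial Finset.univ j) := by
      rw [← hspec, padicValNat.mul hprodne (by omega), padicValNat_prod hp]
      intro i; exact Nat.factorial_ne_zero _
    have hvpos : 1 ≤ padicValNat p (Nat.multinomial Finset.univ j) :=
      one_le_padicValNat_of_dvd hmulpos.ne' hdvd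
    -- Legendre on n and the j i
    have hn' := legendre' hp n
    have hsum' : ∑ i, j i = ∑ i, (sp p (j i) + (p - 1) * padicValNat p ((j i)!)) := by
      exact Finset.sum_congr rfl fun i _ => legendre' hp (j i)
    rw [Finset.sum_add_distrib, ← Finset.mul_sum, hjsum, hjsp] at hsum'
    -- so (p-1)*v(n!) = (p-1)*∑ v((j i)!), hence v(n!) = ∑ v
    have hps : 1 ≤ p - 1 := by omega
    have heq : padicValNat p (n !) = ∑ i, padicValNat p ((j i)!) := by
      have h3 : (p - 1) * padicValNat p (n !) = (p - 1) * ∑ i, padicValNat p ((j i)!) := by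
        omega
      exact Nat.eq_of_mul_eq_mul_left (by omega) h3
    omega
end

section
/- Let p be prime, n ≥ 1, l = max{t : p^t ≤ s_p(n)}, and for 1 ≤ k ≤ n set h_p(n,k) = (1/(p-1)) · min{ s_p(j_1)+...+s_p(j_k) - s_p(n) : j_i ≥ 1, j_1+...+j_k = n }. Then max_{1 ≤ k ≤ n} ( v_p(k) - h_p(n,k) ) = l. -/
lemma sp_zero (p : ℕ) : sp p 0 = 0 := by simp [sp]

lemma sp_mul_base {p : ℕ} (hp2 : 1 < p) (x : ℕ) : sp p (p * x) = sp p x := by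
  rcases Nat.eq_zero_or_pos x with rfl | hx
  · simp [sp]
  · rw [sp, Nat.digits_def' hp2 (by positivity)]
    simp [Nat.mul_mod_right, Nat.mul_div_cancel_left _ (by omega : 0 < p), sp]

lemma sp_pow_mul {p : ℕ} (hp2 : 1 < p) (e x : ℕ) : sp p (p ^ e * x) = sp p x := by
  induction e with
  | zero => simp
  | succ e ih => rw [pow_succ, mul_comm (p^e) p, mul_assoc, sp_mul_base hp2, ih]

lemma sp_pos {p : ℕ} (hp2 : 1 < p) : ∀ {m : ℕ}, 0 < m → 0 < sp p m := by
  intro m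
  induction m using Nat.strong_induction_on with
  | _ m ih =>
    intro hm
    rw [sp, Nat.digits_def' hp2 hm]
    simp only [List.sum_cons]
    rcases Nat.eq_zero_or_pos (m % p) with h | h
    · have hdvd : p ∣ m := Nat.dvd_of_mod_eq_zero h
      have h1 : 0 < m / p := Nat.div_pos (Nat.le_of_dvd hm hdvd) (by omega)
      have h2 : m / p < m := Nat.div_lt_self hm hp2
      have := ih _ h2 h1
      rw [sp] at this; omega
    · omega

lemma sp_pred {p : ℕ} (hp2 : 1 < p) {m : ℕ} (hm : 0 < m) (hpm : ¬ p ∣ m) :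
    sp p (m - 1) + 1 = sp p m := by
  have hr : 1 ≤ m % p := by
    rcases Nat.eq_zero_or_pos (m % p) with h | h
    · exact absurd (Nat.dvd_of_mod_eq_zero h) hpm
    · exact h
  have hrp : m % p < p := Nat.mod_lt _ (by omega)
  have hq : m - 1 = p * (m / p) + (m % p - 1) := by
    have := Nat.div_add_mod m p; omega
  rcases Nat.eq_zero_or_pos (m - 1) with h0 | h0
  · have hm1 : m = 1 := by omega
    subst hm1
    simp [sp, Nat.digits_def' hp2 (by norm_num : (0:ℕ) < 1), Nat.mod_eq_of_lt hp2,
      Nat.div_eq_of_lt hp2]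
  · have h1 : (m - 1) % p = m % p - 1 := by
      rw [hq, Nat.mul_add_mod, Nat.mod_eq_of_lt (by omega)]
    have h2 : (m - 1) / p = m / p := by
      have h3 : (m % p - 1) / p = 0 := Nat.div_eq_of_lt (by omega)
      rw [hq, Nat.mul_add_div (by omega : 0 < p), h3, Nat.add_zero]
    rw [sp, Nat.digits_def' hp2 h0, List.sum_cons, h1, h2]
    rw [sp, Nat.digits_def' hp2 hm, List.sum_cons]
    omega

lemma sp_add {p : ℕ} (hp : p.Prime) (a b : ℕ) :
    ∃ c : ℕ, sp p a + sp p b = sp p (a + b) + (p - 1) * c := by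
  haveI : Fact p.Prime := ⟨hp⟩
  have hle : padicValNat p a.factorial + padicValNat p b.factorial
      ≤ padicValNat p (a + b).factorial := by
    have hd : a.factorial * b.factorial ∣ (a + b).factorial :=
      Nat.factorial_mul_factorial_dvd_factorial_add a b
    rw [← padicValNat.mul a.factorial_ne_zero b.factorial_ne_zero]
    exact (padicValNat_dvd_iff_le (a + b).factorial_ne_zero).mp
      (pow_padicValNat_dvd.trans hd)
  refine ⟨padicValNat p (a + b).factorial
    - (padicValNat p a.factorial + padicValNat p b.factorial), ?_⟩
  have la := sub_one_mul_padicValNat_factorial (p := p) a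
  have lb := sub_one_mul_padicValNat_factorial (p := p) b
  have lab := sub_one_mul_padicValNat_factorial (p := p) (a + b)
  have da : sp p a ≤ a := Nat.digit_sum_le p a
  have db : sp p b ≤ b := Nat.digit_sum_le p b
  have dab : sp p (a + b) ≤ a + b := Nat.digit_sum_le p (a + b)
  have hp1 : 1 ≤ p := hp.one_lt.le
  simp only [sp] at *
  zify [hle, da, db, dab, hp1] at la lb lab ⊢
  linarith

lemma sp_sum {p : ℕ} (hp : p.Prime) {ι : Type*} (s : Finset ι) (f : ι → ℕ) :
    ∃ c : ℕ, ∑ i ∈ s, sp p (f i) = sp p (∑ i ∈ s, f i) + (p - 1) * c := by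
  induction s using Finset.cons_induction with
  | empty => exact ⟨0, by simp [sp]⟩
  | cons a s ha ih =>
    obtain ⟨c1, h1⟩ := ih
    obtain ⟨c2, h2⟩ := sp_add hp (f a) (∑ i ∈ s, f i)
    refine ⟨c1 + c2, ?_⟩
    rw [Finset.sum_cons, Finset.sum_cons, h1, Nat.mul_add]
    zify at h2 ⊢
    linarith

/-- `h_p(n,k) = (1/(p-1)) · min { sₚ(j₁)+⋯+sₚ(jₖ) - sₚ(n) }` over compositions of `n`
into `k` positive parts. -/
noncomputable def hp (p n k : ℕ) : ℤ :=
  sInf {z : ℤ | ∃ j : Fin k → ℕ, (∀ i, 1 ≤ j i) ∧ (∑ i, j i = n) ∧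
    z = ((∑ i, (sp p (j i) : ℤ)) - (sp p n : ℤ)) / ((p : ℤ) - 1)}

lemma sp_ne_zero {p n : ℕ} (hp2 : 1 < p) (hn : 1 ≤ n) : sp p n ≠ 0 :=
  (sp_pos hp2 hn).ne'

/-- split one `p^e` off `n`, decreasing the digit sum by exactly one -/
lemma sp_split {p : ℕ} (hp : p.Prime) {n : ℕ} (hn : 0 < n) (hn2 : 2 ≤ sp p n) :
    ∃ a : ℕ, 1 ≤ a ∧ a ≤ n ∧ sp p a = 1 ∧ sp p (n - a) + 1 = sp p n := by
  have hp2 : 1 < p := hp.one_lt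
  set e := n.factorization p with he
  set m := ordCompl[p] n with hm
  have hnm : p ^ e * m = n := Nat.ordProj_mul_ordCompl_eq_self n p
  have hmpos : 0 < m := Nat.ordCompl_pos p hn.ne'
  have hpm : ¬ p ∣ m := Nat.not_dvd_ordCompl hp hn.ne'
  refine ⟨p ^ e, Nat.one_le_pow _ _ (by omega), ?_, ?_, ?_⟩
  · calc p ^ e ≤ p ^ e * m := Nat.le_mul_of_pos_right _ hmpos
    _ = n := hnm
  · have : sp p (p ^ e * 1) = sp p 1 := sp_pow_mul hp2 e 1
    simpa [sp, Nat.digits_def' hp2 (by norm_num : (0:ℕ) < 1), Nat.mod_eq_of_lt hp2,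
      Nat.div_eq_of_lt hp2] using this
  · have hsub : n - p ^ e = p ^ e * (m - 1) := by
      rw [Nat.mul_sub, mul_one, hnm]
    have hspn : sp p n = sp p m := by rw [← hnm, sp_pow_mul hp2]
    have hm2 : 2 ≤ m := by
      rcases Nat.lt_or_ge m 2 with h | h
      · interval_cases m
        exfalso
        rw [hspn] at hn2
        simp [sp, Nat.digits_def' hp2 (by norm_num : (0:ℕ) < 1), Nat.mod_eq_of_lt hp2,
          Nat.div_eq_of_lt hp2] at hn2
      · exact h
    rw [hsub, sp_pow_mul hp2, sp_pred hp2 hmpos hpm, hspn]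

lemma exists_comp {p : ℕ} (hp : p.Prime) :
    ∀ (k n : ℕ), 1 ≤ k → k ≤ sp p n →
    ∃ j : Fin k → ℕ, (∀ i, 1 ≤ j i) ∧ (∑ i, j i = n) ∧ (∑ i, sp p (j i) = sp p n) := by
  have hp2 : 1 < p := hp.one_lt
  intro k
  induction k with
  | zero => omega
  | succ k ih =>
    intro n hk1 hkn
    rcases Nat.eq_zero_or_pos k with rfl | hk
    · have hn : 0 < n := by
        by_contra h
        have : n = 0 := by omega
        subst this
        simp [sp] at hkn
      exact ⟨fun _ => n, fun _ => hn, by simp, by simp⟩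
    · have hn : 0 < n := by
        by_contra h
        have : n = 0 := by omega
        subst this
        simp [sp] at hkn
      obtain ⟨a, ha1, han, hsa, hsplit⟩ := sp_split hp hn (by omega)
      obtain ⟨j', hj1, hj2, hj3⟩ := ih (n - a) hk (by omega)
      refine ⟨Fin.cons a j', ?_, ?_, ?_⟩
      · intro i
        refine Fin.cases ?_ ?_ i
        · exact ha1
        · intro i'; exact hj1 i'
      · rw [Fin.sum_cons, hj2]; omega
      · rw [Fin.sum_univ_succ]
        simp only [Fin.cons_zero, Fin.cons_succ]
        rw [hj3, hsa]; omega

/-- every element of the `hp` set is a nonnegative integer `c` with `k ≤ sp n + (p-1)c` -/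
lemma mem_hpSet {p n k : ℕ} (hp' : p.Prime) (hk : 1 ≤ k) {z : ℤ}
    (hz : ∃ j : Fin k → ℕ, (∀ i, 1 ≤ j i) ∧ (∑ i, j i = n) ∧
      z = ((∑ i, (sp p (j i) : ℤ)) - (sp p n : ℤ)) / ((p : ℤ) - 1)) :
    ∃ c : ℕ, z = (c : ℤ) ∧ (k : ℤ) ≤ (sp p n : ℤ) + ((p : ℤ) - 1) * c := by
  obtain ⟨j, hj1, hj2, hj3⟩ := hz
  obtain ⟨c, hc⟩ := sp_sum hp' Finset.univ j
  rw [hj2] at hc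
  have hp1 : 1 ≤ p := hp'.one_lt.le
  have hnum : (∑ i, (sp p (j i) : ℤ)) - (sp p n : ℤ) = ((p : ℤ) - 1) * c := by
    have := hc
    zify [hp1] at this
    push_cast
    push_cast at this
    linarith
  have hzz : z = c := by
    rw [hj3, hnum, Int.mul_ediv_cancel_left _ (by
      have : (2 : ℤ) ≤ (p : ℤ) := by exact_mod_cast hp'.two_le
      omega)]
  refine ⟨c, hzz, ?_⟩
  have hks : k ≤ ∑ i, sp p (j i) := by
    calc k = ∑ _i : Fin k, 1 := by simp
    _ ≤ ∑ i, sp p (j i) := Finset.sum_le_sum fun i _ => sp_pos hp'.one_lt (hj1 i)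
  have : (k : ℤ) ≤ ∑ i, (sp p (j i) : ℤ) := by exact_mod_cast hks
  linarith [hnum]

lemma hpSet_nonempty {p n k : ℕ} (hk1 : 1 ≤ k) (hkn : k ≤ n) :
    ∃ z : ℤ, ∃ j : Fin k → ℕ, (∀ i, 1 ≤ j i) ∧ (∑ i, j i = n) ∧
      z = ((∑ i, (sp p (j i) : ℤ)) - (sp p n : ℤ)) / ((p : ℤ) - 1) := by
  obtain ⟨k, rfl⟩ : ∃ k', k = k' + 1 := ⟨k - 1, by omega⟩
  refine ⟨_, Fin.cons (n - k) (fun _ => 1), ?_, ?_, rfl⟩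
  · intro i
    refine Fin.cases ?_ ?_ i
    · show 1 ≤ n - k; omega
    · intro i'; exact le_refl 1
  · rw [Fin.sum_cons]
    simp only [Finset.sum_const, Finset.card_univ, Fintype.card_fin, smul_eq_mul, mul_one]
    omega

theorem max_val_sub_hp (p : ℕ) (hprime : p.Prime) (n : ℕ) (hn : 1 ≤ n)
    (l : ℕ) (hl : l = Nat.log p (sp p n)) :
    IsGreatest {z : ℤ | ∃ k : ℕ, 1 ≤ k ∧ k ≤ n ∧
      z = (padicValNat p k : ℤ) - hp p n k} (l : ℤ) := by
  haveI : Fact p.Prime := ⟨hprime⟩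
  have hp2 : 1 < p := hprime.one_lt
  have hspn : 0 < sp p n := sp_pos hp2 hn
  have hspn_le : sp p n ≤ n := Nat.digit_sum_le p n
  -- generic facts about `hp p n k` for 1 ≤ k ≤ n
  have key : ∀ k : ℕ, 1 ≤ k → k ≤ n →
      ∃ c : ℕ, hp p n k = (c : ℤ) ∧ (k : ℤ) ≤ (sp p n : ℤ) + ((p : ℤ) - 1) * c := by
    intro k hk1 hkn
    have hne : Set.Nonempty {z : ℤ | ∃ j : Fin k → ℕ, (∀ i, 1 ≤ j i) ∧ (∑ i, j i = n) ∧
        z = ((∑ i, (sp p (j i) : ℤ)) - (sp p n : ℤ)) / ((p : ℤ) - 1)} := by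
      obtain ⟨z, hz⟩ := hpSet_nonempty (p := p) hk1 hkn
      exact ⟨z, hz⟩
    have hbdd : BddBelow {z : ℤ | ∃ j : Fin k → ℕ, (∀ i, 1 ≤ j i) ∧ (∑ i, j i = n) ∧
        z = ((∑ i, (sp p (j i) : ℤ)) - (sp p n : ℤ)) / ((p : ℤ) - 1)} := by
      refine ⟨0, fun z hz => ?_⟩
      obtain ⟨c, rfl, _⟩ := mem_hpSet hprime hk1 hz
      positivity
    have hmem := Int.csInf_mem hne hbdd
    exact mem_hpSet hprime hk1 hmem
  constructor
  · -- membership : take k = p ^ l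
    refine ⟨p ^ l, Nat.one_le_pow _ _ (by omega), ?_, ?_⟩
    · calc p ^ l ≤ sp p n := by
            rw [hl]; exact Nat.pow_log_le_self p hspn.ne'
      _ ≤ n := hspn_le
    · have hval : padicValNat p (p ^ l) = l := padicValNat.prime_pow l
      have hhp : hp p n (p ^ l) = 0 := by
        have hkle : p ^ l ≤ sp p n := by
          rw [hl]; exact Nat.pow_log_le_self p hspn.ne'
        have hk1 : 1 ≤ p ^ l := Nat.one_le_pow _ _ (by omega)
        obtain ⟨j, hj1, hj2, hj3⟩ := exists_comp hprime (p ^ l) n hk1 hkle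
        have h0mem : (0 : ℤ) ∈ {z : ℤ | ∃ j : Fin (p ^ l) → ℕ, (∀ i, 1 ≤ j i) ∧
            (∑ i, j i = n) ∧
            z = ((∑ i, (sp p (j i) : ℤ)) - (sp p n : ℤ)) / ((p : ℤ) - 1)} := by
          refine ⟨j, hj1, hj2, ?_⟩
          have : (∑ i, (sp p (j i) : ℤ)) - (sp p n : ℤ) = 0 := by
            have : (∑ i, (sp p (j i) : ℤ)) = (sp p n : ℤ) := by exact_mod_cast hj3
            omega
          rw [this, Int.zero_ediv]
        have hbdd : BddBelow {z : ℤ | ∃ j : Fin (p ^ l) → ℕ, (∀ i, 1 ≤ j i) ∧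
            (∑ i, j i = n) ∧
            z = ((∑ i, (sp p (j i) : ℤ)) - (sp p n : ℤ)) / ((p : ℤ) - 1)} := by
          refine ⟨0, fun z hz => ?_⟩
          obtain ⟨c, rfl, _⟩ := mem_hpSet hprime hk1 hz
          positivity
        refine le_antisymm (csInf_le hbdd h0mem) ?_
        · refine le_csInf ⟨0, h0mem⟩ fun z hz => ?_
          obtain ⟨c, rfl, _⟩ := mem_hpSet hprime hk1 hz
          positivity
      rw [hval, hhp, sub_zero]
  · -- upper bound
    rintro z ⟨k, hk1, hkn, rfl⟩
    obtain ⟨c, hc, hineq⟩ := key k hk1 hkn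
    rw [hc]
    set m := padicValNat p k with hm
    have hpm : (p : ℤ) ^ m ≤ (k : ℤ) := by
      exact_mod_cast Nat.le_of_dvd hk1 pow_padicValNat_dvd
    have hsl : (sp p n : ℤ) < (p : ℤ) ^ (l + 1) := by
      exact_mod_cast hl ▸ Nat.lt_pow_succ_log_self hp2 (sp p n)
    have hpz : (2 : ℤ) ≤ (p : ℤ) := by exact_mod_cast hprime.two_le
    rcases le_or_gt m l with h | h
    · have : (0 : ℤ) ≤ c := by positivity
      have : (m : ℤ) ≤ l := by exact_mod_cast h
      linarith
    · -- m > l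
      set t := m - l - 1 with ht
      have hmt : m = l + 1 + t := by omega
      have hpow : (p : ℤ) ^ m = (p : ℤ) ^ (l + 1) * (p : ℤ) ^ t := by
        rw [hmt, pow_add]
      have hbern : 1 + (t : ℤ) * ((p : ℤ) - 1) ≤ (p : ℤ) ^ t := by
        have h' := one_add_mul_le_pow (a := (p : ℤ) - 1) (by linarith) t
        rw [show (1 + ((p : ℤ) - 1)) = (p : ℤ) by ring] at h'
        exact h'
      have hple : (1 : ℤ) ≤ (p : ℤ) ^ (l + 1) := one_le_pow₀ (by linarith)
      have hpt : (1 : ℤ) ≤ (p : ℤ) ^ t := one_le_pow₀ (by linarith)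
      have hct : (t : ℤ) + 1 ≤ c := by
        nlinarith [mul_nonneg (sub_nonneg.mpr hple) (sub_nonneg.mpr hpt),
          mul_le_mul_of_nonneg_left hbern (by linarith : (0 : ℤ) ≤ (p : ℤ) ^ (l + 1))]
      have : ((m : ℤ)) = l + 1 + t := by exact_mod_cast hmt
      linarith
end
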